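/- Optimality of the greedy rate allocation (core of Theorem 8): Let L ≥ 1, let λ = (λ_1,…,λ_L) with all λ_l ≥ 0, let H_1,…,H_L ≥ 0, let R_0 ≥ 0, and for m ∈ {1,…,L} define g_m(λ) := f_m(λ)·(∑_{α=1}^{m} H_α − R_0) + ∑_{α=m+1}^{L} f_α(λ) H_α. Then: (i) for every m ∈ {1,…,L−1}, g_{m+1}(λ) − g_m(λ) = (f_{m+1}(λ) − f_m(λ))·(∑_{α=1}^{m} H_α − R_0); (ii) if ∑_{α=1}^{q−1} H_α ≤ R_0 ≤ ∑_{α=1}^{q} H_α for some q ∈ {1,…,L}, then max_{1 ≤ m ≤ L} g_m(λ) = g_q(λ); and (iii) if R_0 ≥ ∑_{α=1}^{L} H_α, then max_{1 ≤ m ≤ L} g_m(λ) = g_L(λ) = f_L(λ)·(∑_{α=1}^{L} H_α − R_0) ≤ 0. -/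
import Mathlib


/-- `Ω_L^{(α)}`: the collection of all `α`-element subsets of the index set. -/
def OmegaL (L α : ℕ) : Finset (Finset (Fin L)) :=
  Finset.powersetCard α (Finset.univ : Finset (Fin L))

/-- `f_α(λ)`: the optimal value of the covering linear program. -/
noncomputable def fLP (L : ℕ) (lam : Fin L → ℝ) (α : ℕ) : ℝ :=
  sSup { x : ℝ | ∃ c : Finset (Fin L) → ℝ,
    (∀ U ∈ OmegaL L α, 0 ≤ c U) ∧
    (∀ l : Fin L, ∑ U ∈ (OmegaL L α).filter (fun U => l ∈ U), c U ≤ lam l) ∧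
    x = ∑ U ∈ OmegaL L α, c U }

def fLPset (L : ℕ) (lam : Fin L → ℝ) (α : ℕ) : Set ℝ :=
  { x : ℝ | ∃ c : Finset (Fin L) → ℝ,
    (∀ U ∈ OmegaL L α, 0 ≤ c U) ∧
    (∀ l : Fin L, ∑ U ∈ (OmegaL L α).filter (fun U => l ∈ U), c U ≤ lam l) ∧
    x = ∑ U ∈ OmegaL L α, c U }

lemma fLP_eq (L : ℕ) (lam : Fin L → ℝ) (α : ℕ) : fLP L lam α = sSup (fLPset L lam α) := rfl

lemma zero_mem_fLPset {L : ℕ} (lam : Fin L → ℝ) (hlam : ∀ l, 0 ≤ lam l) (α : ℕ) :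
    (0:ℝ) ∈ fLPset L lam α :=
  ⟨fun _ => 0, by simp, by simp [hlam], by simp⟩

/-- generic double-counting swap -/
lemma sum_filter_comm {β γ : Type*} (A : Finset β) (B : Finset γ)
    (p : β → γ → Prop) [∀ V U, Decidable (p V U)] (f : γ → ℝ) :
    ∑ V ∈ A, ∑ U ∈ B.filter (fun U => p V U), f U
      = ∑ U ∈ B, ((A.filter (fun V => p V U)).card : ℝ) * f U := by
  have h1 : ∀ V ∈ A, ∑ U ∈ B.filter (fun U => p V U), f U
      = ∑ U ∈ B, if p V U then f U else 0 := fun V _ => Finset.sum_filter _ _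
  rw [Finset.sum_congr rfl h1, Finset.sum_comm]
  refine Finset.sum_congr rfl fun U _ => ?_
  rw [← Finset.sum_filter, Finset.sum_const, nsmul_eq_mul]

lemma fLPset_le {L : ℕ} (lam : Fin L → ℝ) {α : ℕ} (hα : 1 ≤ α) :
    ∀ x ∈ fLPset L lam α, x ≤ ∑ l : Fin L, lam l := by
  rintro x ⟨c, hc0, hcon, rfl⟩
  have h1 : ∑ U ∈ OmegaL L α, c U ≤ ∑ U ∈ OmegaL L α, (α:ℝ) * c U :=
    Finset.sum_le_sum fun U hU => le_mul_of_one_le_left (hc0 U hU) (by exact_mod_cast hα)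
  have h2 : ∑ l : Fin L, ∑ U ∈ (OmegaL L α).filter (fun U => l ∈ U), c U
      = ∑ U ∈ OmegaL L α, ((Finset.univ.filter (fun l : Fin L => l ∈ U)).card : ℝ) * c U :=
    sum_filter_comm _ _ _ _
  have h3 : ∀ U ∈ OmegaL L α, ((Finset.univ.filter (fun l : Fin L => l ∈ U)).card : ℝ) * c U
      = (α:ℝ) * c U := by
    intro U hU
    rw [Finset.filter_mem_eq_inter, Finset.univ_inter, (Finset.mem_powersetCard.mp hU).2]
  calc ∑ U ∈ OmegaL L α, c U ≤ ∑ U ∈ OmegaL L α, (α:ℝ) * c U := h1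
    _ = ∑ l : Fin L, ∑ U ∈ (OmegaL L α).filter (fun U => l ∈ U), c U := by
        rw [h2]; exact (Finset.sum_congr rfl h3).symm
    _ ≤ ∑ l : Fin L, lam l := Finset.sum_le_sum fun l _ => hcon l

lemma fLPset_bddAbove {L : ℕ} (lam : Fin L → ℝ) {α : ℕ} (hα : 1 ≤ α) :
    BddAbove (fLPset L lam α) :=
  ⟨∑ l : Fin L, lam l, fun x hx => fLPset_le lam hα x hx⟩

lemma fLP_nonneg {L : ℕ} (lam : Fin L → ℝ) (hlam : ∀ l, 0 ≤ lam l) {α : ℕ} (hα : 1 ≤ α) :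
    0 ≤ fLP L lam α :=
  le_csSup (fLPset_bddAbove lam hα) (zero_mem_fLPset lam hlam α)

lemma fLP_succ_le {L : ℕ} (lam : Fin L → ℝ) (hlam : ∀ l, 0 ≤ lam l) {α : ℕ} (hα : 1 ≤ α) :
    fLP L lam (α + 1) ≤ fLP L lam α := by
  rw [fLP_eq, fLP_eq]
  refine csSup_le ⟨0, zero_mem_fLPset lam hlam _⟩ ?_
  rintro x ⟨c, hc0, hcon, rfl⟩
  have hpos : (0:ℝ) < (α:ℝ) + 1 := by positivity
  set c' : Finset (Fin L) → ℝ :=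
    fun V => (∑ U ∈ (OmegaL L (α+1)).filter (fun U => V ⊆ U), c U) / ((α:ℝ) + 1) with hc'
  refine le_csSup (fLPset_bddAbove lam hα) ⟨c', ?_, ?_, ?_⟩
  · intro V _
    apply div_nonneg _ hpos.le
    exact Finset.sum_nonneg fun U hU => hc0 U (Finset.mem_filter.mp hU).1
  · -- constraints
    intro l
    rw [← Finset.sum_div, div_le_iff₀ hpos]
    rw [sum_filter_comm]
    have hterm : ∀ U ∈ OmegaL L (α+1),
        (((((OmegaL L α).filter (fun V => l ∈ V))).filter (fun V => V ⊆ U)).card : ℝ) * c U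
          ≤ ((α:ℝ) + 1) * (if l ∈ U then c U else 0) := by
      intro U hU
      obtain ⟨-, hcard⟩ := Finset.mem_powersetCard.mp hU
      by_cases hl : l ∈ U
      · simp only [hl, if_true]
        refine mul_le_mul_of_nonneg_right ?_ (hc0 U hU)
        have hsub : (((OmegaL L α).filter (fun V => l ∈ V))).filter (fun V => V ⊆ U)
            ⊆ Finset.powersetCard α U := by
          intro V hV
          simp only [Finset.mem_filter, OmegaL, Finset.mem_powersetCard] at hV ⊢
          exact ⟨hV.2, hV.1.1.2⟩
        have := Finset.card_le_card hsub
        rw [Finset.card_powersetCard, hcard, Nat.choose_succ_self_right] at this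
        exact_mod_cast this
      · have hempty : (((OmegaL L α).filter (fun V => l ∈ V))).filter (fun V => V ⊆ U) = ∅ := by
          refine Finset.filter_eq_empty_iff.mpr fun V hV hVU => ?_
          exact hl (hVU (Finset.mem_filter.mp hV).2)
        simp [hempty, hl]
    calc ∑ U ∈ OmegaL L (α+1),
          (((((OmegaL L α).filter (fun V => l ∈ V))).filter (fun V => V ⊆ U)).card : ℝ) * c U
        ≤ ∑ U ∈ OmegaL L (α+1), ((α:ℝ) + 1) * (if l ∈ U then c U else 0) :=
          Finset.sum_le_sum hterm
      _ = ((α:ℝ) + 1) * ∑ U ∈ (OmegaL L (α+1)).filter (fun U => l ∈ U), c U := by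
          rw [← Finset.mul_sum, Finset.sum_filter]
      _ ≤ ((α:ℝ) + 1) * lam l := mul_le_mul_of_nonneg_left (hcon l) hpos.le
      _ = lam l * ((α:ℝ) + 1) := mul_comm _ _
  · -- objective value equality
    rw [← Finset.sum_div, sum_filter_comm]
    have hcount : ∀ U ∈ OmegaL L (α+1),
        (((OmegaL L α).filter (fun V => V ⊆ U)).card : ℝ) * c U = ((α:ℝ) + 1) * c U := by
      intro U hU
      obtain ⟨-, hcard⟩ := Finset.mem_powersetCard.mp hU
      congr 1
      have : (OmegaL L α).filter (fun V => V ⊆ U) = Finset.powersetCard α U := by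
        ext V
        simp only [Finset.mem_filter, OmegaL, Finset.mem_powersetCard]
        exact ⟨fun h => ⟨h.2, h.1.2⟩, fun h => ⟨⟨Finset.subset_univ V, h.2⟩, h.1⟩⟩
      rw [this, Finset.card_powersetCard, hcard, Nat.choose_succ_self_right]
      push_cast; ring
    rw [Finset.sum_congr rfl hcount, ← Finset.mul_sum]
    field_simp

/-- `c` is an optimal solution of the linear program defining `f_α(λ)`. -/
def IsOptimal (L : ℕ) (lam : Fin L → ℝ) (α : ℕ) (c : Finset (Fin L) → ℝ) : Prop :=
  (∀ U ∈ OmegaL L α, 0 ≤ c U) ∧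
  (∀ l : Fin L, ∑ U ∈ (OmegaL L α).filter (fun U => l ∈ U), c U ≤ lam l) ∧
  ∑ U ∈ OmegaL L α, c U = fLP L lam α

/-- `g_m(λ) = f_m(λ)·(∑_{α=1}^m H_α − R₀) + ∑_{α=m+1}^L f_α(λ) H_α`. -/
noncomputable def gGreedy (L : ℕ) (lam : Fin L → ℝ) (H : ℕ → ℝ) (R0 : ℝ) (m : ℕ) : ℝ :=
  fLP L lam m * (∑ α ∈ Finset.Icc 1 m, H α - R0) +
    ∑ α ∈ Finset.Icc (m + 1) L, fLP L lam α * H α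

lemma gGreedy_step {L : ℕ} (lam : Fin L → ℝ) (H : ℕ → ℝ) (R0 : ℝ)
    {m : ℕ} (hm : 1 ≤ m) (hmL : m < L) :
    gGreedy L lam H R0 (m + 1) - gGreedy L lam H R0 m =
      (fLP L lam (m + 1) - fLP L lam m) * (∑ α ∈ Finset.Icc 1 m, H α - R0) := by
  unfold gGreedy
  have h1 : ∑ α ∈ Finset.Icc 1 (m+1), H α = ∑ α ∈ Finset.Icc 1 m, H α + H (m+1) :=
    Finset.sum_Icc_succ_top (by omega) H
  have h2 : Finset.Icc (m+1) L = insert (m+1) (Finset.Icc (m+2) L) := by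
    ext k; simp only [Finset.mem_Icc, Finset.mem_insert]; omega
  rw [h1, h2, Finset.sum_insert (by simp only [Finset.mem_Icc]; omega)]
  ring

lemma g_chain_up {L : ℕ} (lam : Fin L → ℝ) (hlam : ∀ l, 0 ≤ lam l) (H : ℕ → ℝ) (R0 : ℝ)
    {m n : ℕ} (hm : 1 ≤ m) (hmn : m ≤ n) (hnL : n ≤ L)
    (hS : ∀ k, 1 ≤ k → k < n → ∑ α ∈ Finset.Icc 1 k, H α ≤ R0) :
    gGreedy L lam H R0 m ≤ gGreedy L lam H R0 n := by
  induction n, hmn using Nat.le_induction with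
  | base => exact le_rfl
  | succ n hmn ih =>
    have h1 : gGreedy L lam H R0 m ≤ gGreedy L lam H R0 n :=
      ih (by omega) (fun k hk1 hk2 => hS k hk1 (by omega))
    have hstep := gGreedy_step lam H R0 (le_trans hm hmn) (by omega)
    have hf := fLP_succ_le lam hlam (α := n) (le_trans hm hmn)
    have hs := hS n (le_trans hm hmn) (by omega)
    have hprod : 0 ≤ (fLP L lam n - fLP L lam (n+1)) * (R0 - ∑ α ∈ Finset.Icc 1 n, H α) :=
      mul_nonneg (by linarith) (by linarith)
    nlinarith [hstep, hprod, h1]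

lemma g_chain_down {L : ℕ} (lam : Fin L → ℝ) (hlam : ∀ l, 0 ≤ lam l) (H : ℕ → ℝ) (R0 : ℝ)
    {q n : ℕ} (hq : 1 ≤ q) (hqn : q ≤ n) (hnL : n ≤ L)
    (hS : ∀ k, q ≤ k → k < n → R0 ≤ ∑ α ∈ Finset.Icc 1 k, H α) :
    gGreedy L lam H R0 n ≤ gGreedy L lam H R0 q := by
  induction n, hqn using Nat.le_induction with
  | base => exact le_rfl
  | succ n hqn ih =>
    have h1 : gGreedy L lam H R0 n ≤ gGreedy L lam H R0 q :=
      ih (by omega) (fun k hk1 hk2 => hS k hk1 (by omega))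
    have hstep := gGreedy_step lam H R0 (le_trans hq hqn) (by omega)
    have hf := fLP_succ_le lam hlam (α := n) (le_trans hq hqn)
    have hs := hS n hqn (by omega)
    have hprod : 0 ≤ (fLP L lam n - fLP L lam (n+1)) * (∑ α ∈ Finset.Icc 1 n, H α - R0) :=
      mul_nonneg (by linarith) (by linarith)
    nlinarith [hstep, hprod, h1]


/-- **Optimality of the greedy rate allocation at the all-access encoder**
(core of Theorem 8). -/
theorem greedy_rate_allocation_optimal
    {L : ℕ} (hL : 1 ≤ L) (lam : Fin L → ℝ) (hlam : ∀ l, 0 ≤ lam l)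
    (H : ℕ → ℝ) (hH : ∀ α ∈ Finset.Icc 1 L, 0 ≤ H α) (R0 : ℝ) (hR0 : 0 ≤ R0) :
    (∀ m : ℕ, 1 ≤ m → m < L →
        gGreedy L lam H R0 (m + 1) - gGreedy L lam H R0 m =
          (fLP L lam (m + 1) - fLP L lam m) * (∑ α ∈ Finset.Icc 1 m, H α - R0)) ∧
    (∀ q ∈ Finset.Icc 1 L,
        ∑ α ∈ Finset.Icc 1 (q - 1), H α ≤ R0 → R0 ≤ ∑ α ∈ Finset.Icc 1 q, H α →
        ∀ m ∈ Finset.Icc 1 L, gGreedy L lam H R0 m ≤ gGreedy L lam H R0 q) ∧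
    (∑ α ∈ Finset.Icc 1 L, H α ≤ R0 →
        (∀ m ∈ Finset.Icc 1 L, gGreedy L lam H R0 m ≤ gGreedy L lam H R0 L) ∧
        gGreedy L lam H R0 L = fLP L lam L * (∑ α ∈ Finset.Icc 1 L, H α - R0) ∧
        gGreedy L lam H R0 L ≤ 0) := by
  have sum_mono : ∀ a b : ℕ, a ≤ b → b ≤ L →
      ∑ α ∈ Finset.Icc 1 a, H α ≤ ∑ α ∈ Finset.Icc 1 b, H α := by
    intro a b hab hbL
    refine Finset.sum_le_sum_of_subset_of_nonneg
      (Finset.Icc_subset_Icc_right hab) fun i hi _ => ?_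
    refine hH i ?_
    simp only [Finset.mem_Icc] at hi ⊢
    omega
  refine ⟨fun m hm hmL => gGreedy_step lam H R0 hm hmL, ?_, ?_⟩
  · intro q hq h1 h2 m hm
    simp only [Finset.mem_Icc] at hq hm
    rcases le_or_gt m q with h | h
    · refine g_chain_up lam hlam H R0 hm.1 h hq.2 fun k hk1 hk2 => ?_
      exact le_trans (sum_mono k (q-1) (by omega) (by omega)) h1
    · refine g_chain_down lam hlam H R0 hq.1 h.le hm.2 fun k hk1 hk2 => ?_
      exact le_trans h2 (sum_mono q k hk1 (by omega))
  · intro hRL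
    have hmax : ∀ m ∈ Finset.Icc 1 L, gGreedy L lam H R0 m ≤ gGreedy L lam H R0 L := by
      intro m hm
      simp only [Finset.mem_Icc] at hm
      refine g_chain_up lam hlam H R0 hm.1 hm.2 le_rfl fun k hk1 hk2 => ?_
      exact le_trans (sum_mono k L (by omega) le_rfl) hRL
    have hval : gGreedy L lam H R0 L = fLP L lam L * (∑ α ∈ Finset.Icc 1 L, H α - R0) := by
      unfold gGreedy
      rw [show Finset.Icc (L+1) L = ∅ from Finset.Icc_eq_empty (by omega), Finset.sum_empty, add_zero]
    refine ⟨hmax, hval, ?_⟩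
    rw [hval]
    exact mul_nonpos_of_nonneg_of_nonpos (fLP_nonneg lam hlam hL) (by linarith)
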